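/- Characterisation of completions in the 2-serrated case: a function K : I × I → ℝ is a completion of a partial covariance K_Ω on Ω = (I₁×I₁) ∪ (I₂×I₂) if and only if K = K⋆ + C, where K⋆ is the canonical completion, C vanishes on I₁² ∪ I₂², and the function L on [(I₁∖I₂) ∪ (I₂∖I₁)]² defined by L = K_{I₁}/K_J on (I₁∖I₂)², L = K_{I₂}/K_J on (I₂∖I₁)², and L = C on the two off-diagonal rectangles, is itself a covariance kernel. -/
import Mathlib


open Set MeasureTheory
open scoped RealInnerProductSpace Classical

noncomputable section

/-- `K` is a covariance kernel on the set `S`: symmetric and positive semidefinite. -/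
def IsCovOn {I : Type*} (S : Set I) (K : I → I → ℝ) : Prop :=
  (∀ s ∈ S, ∀ t ∈ S, K s t = K t s) ∧
  ∀ (n : ℕ) (t : Fin n → I), (∀ i, t i ∈ S) → ∀ c : Fin n → ℝ,
    0 ≤ ∑ i, ∑ j, c i * c j * K (t i) (t j)

/-- `Ω` is a symmetric domain containing the diagonal. -/
def IsSymmDomain {I : Type*} (Ω : Set (I × I)) : Prop :=
  (∀ s t : I, (s, t) ∈ Ω ↔ (t, s) ∈ Ω) ∧ ∀ t : I, (t, t) ∈ Ω

/-- `K` is a partial covariance on `Ω`: each square inside `Ω` carries a covariance. -/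
def IsPartialCov {I : Type*} (Ω : Set (I × I)) (K : I → I → ℝ) : Prop :=
  ∀ J : Set I, J ×ˢ J ⊆ Ω → IsCovOn J K

/-- `K` is a covariance-kernel completion of `KΩ` from the domain `Ω`. -/
def IsCompletion {I : Type*} (Ω : Set (I × I)) (KΩ K : I → I → ℝ) : Prop :=
  IsCovOn (univ : Set I) K ∧ ∀ p ∈ Ω, K p.1 p.2 = KΩ p.1 p.2

/-- `a ∈ H` represents the function `f : J → ℝ` in the (abstract realization via the feature
map `φ` of the) RKHS of the kernel realized by `φ`: `a` lies in the closed span of the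
features and the reproducing formula `f u = ⟪a, φ u⟫` holds. -/
def RepIn {J : Type*} {H : Type*} [NormedAddCommGroup H] [InnerProductSpace ℝ H]
    (φ : J → H) (a : H) (f : J → ℝ) : Prop :=
  a ∈ closure ((Submodule.span ℝ (Set.range φ) : Submodule ℝ H) : Set H) ∧
  ∀ u : J, f u = ⟪a, φ u⟫

lemma inner_sum_sum {H : Type*} [NormedAddCommGroup H] [InnerProductSpace ℝ H]
    {n m : ℕ} (c : Fin n → ℝ) (d : Fin m → ℝ) (x : Fin n → H) (y : Fin m → H) :
    ⟪∑ i, c i • x i, ∑ j, d j • y j⟫ = ∑ i, ∑ j, c i * d j * ⟪x i, y j⟫ := by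
  rw [sum_inner]
  refine Finset.sum_congr rfl fun i _ => ?_
  rw [inner_sum]
  refine Finset.sum_congr rfl fun j _ => ?_
  rw [real_inner_smul_left, real_inner_smul_right]; ring

lemma quad_inner {H : Type*} [NormedAddCommGroup H] [InnerProductSpace ℝ H]
    {n : ℕ} (c : Fin n → ℝ) (x : Fin n → H) :
    ∑ i, ∑ j, c i * c j * ⟪x i, x j⟫ = ‖∑ i, c i • x i‖ ^ 2 := by
  rw [← inner_sum_sum, real_inner_self_eq_norm_sq]

lemma closure_span_inner_zero {H : Type*} [NormedAddCommGroup H] [InnerProductSpace ℝ H]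
    {J : Type*} (φ : J → H) (z : H) (hz : ∀ v : J, ⟪z, φ v⟫ = 0)
    {y : H} (hy : y ∈ closure ((Submodule.span ℝ (Set.range φ) : Submodule ℝ H) : Set H)) :
    ⟪z, y⟫ = 0 := by
  have hcl : IsClosed {w : H | ⟪z, w⟫ = (0:ℝ)} :=
    isClosed_eq (Continuous.inner continuous_const continuous_id) continuous_const
  have hsub : ((Submodule.span ℝ (Set.range φ) : Submodule ℝ H) : Set H) ⊆
      {w | ⟪z, w⟫ = (0:ℝ)} := by
    intro w hw
    induction hw using Submodule.span_induction with
    | mem w hw => obtain ⟨v, rfl⟩ := hw; exact hz v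
    | zero => simp
    | add w₁ w₂ _ _ h1 h2 => simp only [mem_setOf_eq, inner_add_right] at *; rw [h1, h2]; ring
    | smul r w _ h => simp only [mem_setOf_eq, real_inner_smul_right] at *; rw [h]; ring
  exact closure_minimal hsub hcl hy

lemma schur_psd {I : Type*} {J : Type*} {H : Type*} [NormedAddCommGroup H]
    [InnerProductSpace ℝ H] (φ : J → H) (e : J → I) (K : I → I → ℝ)
    (hsym : ∀ s t : I, K s t = K t s)
    (hpsd : ∀ (n : ℕ) (t : Fin n → I) (c : Fin n → ℝ),
      0 ≤ ∑ i, ∑ j, c i * c j * K (t i) (t j))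
    (a : I → H)
    (hcl : ∀ s, a s ∈ closure ((Submodule.span ℝ (Set.range φ) : Submodule ℝ H) : Set H))
    (hrep : ∀ (s : I) (u : J), K s (e u) = ⟪a s, φ u⟫)
    (hker : ∀ u v : J, K (e u) (e v) = ⟪φ u, φ v⟫)
    (n : ℕ) (t : Fin n → I) (c : Fin n → ℝ) :
    ‖∑ i, c i • a (t i)‖ ^ 2 ≤ ∑ i, ∑ j, c i * c j * K (t i) (t j) := by
  set v : H := ∑ i, c i • a (t i) with hv
  set Q : ℝ := ∑ i, ∑ j, c i * c j * K (t i) (t j) with hQ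
  by_contra hcon
  push_neg at hcon
  set ε : ℝ := (‖v‖ ^ 2 - Q) / 2 with hε
  have hεpos : 0 < ε := by rw [hε]; linarith
  have hvmem : v ∈ closure ((Submodule.span ℝ (Set.range φ) : Submodule ℝ H) : Set H) := by
    rw [← Submodule.topologicalClosure_coe]
    exact Submodule.sum_mem _ fun i _ => Submodule.smul_mem _ _ <| by
      rw [← SetLike.mem_coe, Submodule.topologicalClosure_coe]; exact hcl (t i)
  obtain ⟨w, hwmem, hwdist⟩ := Metric.mem_closure_iff.mp hvmem (Real.sqrt ε)
    (Real.sqrt_pos.mpr hεpos)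
  have hwsq : ‖v - w‖ ^ 2 < ε := by
    have h1 : ‖v - w‖ < Real.sqrt ε := by rwa [← dist_eq_norm]
    calc ‖v - w‖ ^ 2 < Real.sqrt ε ^ 2 := by
          apply pow_lt_pow_left₀ h1 (norm_nonneg _); norm_num
      _ = ε := Real.sq_sqrt hεpos.le
  obtain ⟨m, d, g, hg⟩ := Submodule.mem_span_set'.mp hwmem
  choose u hu using fun i => (g i).2
  have hw : w = ∑ i, d i • φ (u i) := by
    rw [← hg]; exact Finset.sum_congr rfl fun i _ => by rw [hu]
  have hkey := hpsd (n + m) (Fin.append t (e ∘ u)) (Fin.append c (fun i => -(d i)))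
  have hvw : ⟪v, w⟫ = ∑ i, ∑ j, c i * d j * K (t i) (e (u j)) := by
    rw [hv, hw, inner_sum_sum]
    exact Finset.sum_congr rfl fun i _ => Finset.sum_congr rfl fun j _ => by rw [hrep]
  have hww : ‖w‖ ^ 2 = ∑ i, ∑ j, d i * d j * K (e (u i)) (e (u j)) := by
    rw [← real_inner_self_eq_norm_sq, hw, inner_sum_sum]
    exact Finset.sum_congr rfl fun i _ => Finset.sum_congr rfl fun j _ => by rw [hker]
  have hexpand : ∑ i, ∑ j, (Fin.append c (fun i => -(d i))) i *
      (Fin.append c (fun i => -(d i))) j *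
      K ((Fin.append t (e ∘ u)) i) ((Fin.append t (e ∘ u)) j)
      = Q - 2 * ⟪v, w⟫ + ‖w‖ ^ 2 := by
    simp only [Fin.sum_univ_add, Fin.append_left, Fin.append_right, Function.comp_apply,
      Finset.sum_add_distrib]
    have hba : ∑ i : Fin m, ∑ j : Fin n, (-(d i)) * c j * K (e (u i)) (t j) = -⟪v, w⟫ := by
      rw [hvw, Finset.sum_comm, ← Finset.sum_neg_distrib]
      refine Finset.sum_congr rfl fun i _ => ?_
      rw [← Finset.sum_neg_distrib]
      exact Finset.sum_congr rfl fun j _ => by rw [hsym]; ring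
    have hab : ∑ i : Fin n, ∑ j : Fin m, c i * (-(d j)) * K (t i) (e (u j)) = -⟪v, w⟫ := by
      rw [hvw, ← Finset.sum_neg_distrib]
      refine Finset.sum_congr rfl fun i _ => ?_
      rw [← Finset.sum_neg_distrib]
      exact Finset.sum_congr rfl fun j _ => by ring
    have hbb : ∑ i : Fin m, ∑ j : Fin m, (-(d i)) * (-(d j)) * K (e (u i)) (e (u j))
        = ‖w‖ ^ 2 := by
      rw [hww]
      exact Finset.sum_congr rfl fun i _ => Finset.sum_congr rfl fun j _ => by ring
    rw [hab, hba, hbb, hQ]; ring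
  rw [hexpand] at hkey
  have hnorm : ‖v - w‖ ^ 2 = ‖v‖ ^ 2 - 2 * ⟪v, w⟫ + ‖w‖ ^ 2 := norm_sub_sq_real v w
  linarith


/-- Characterisation of completions in the 2-serrated case: `K` completes `KΩ` iff
`K = K⋆ + C` where `K⋆` is the canonical completion, `C` vanishes on `I₁² ∪ I₂²`, and the
kernel `L` on `[(I₁∖I₂) ∪ (I₂∖I₁)]²` given by the Schur complements `K_{I₁}/K_J`,
`K_{I₂}/K_J` on the diagonal blocks and by `C` on the off-diagonal blocks is a covariance.
Schur complements and the canonical completion are expressed through the feature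
realization `(H, φ)` of `K_J` and representing vectors `a s` of `KΩ(s,·)|_J`. -/
theorem characterisation_two_serrated {I : Type*} (I₁ I₂ : Set I)
    (hcover : I₁ ∪ I₂ = univ) (hne : (I₁ ∩ I₂).Nonempty)
    (KΩ : I → I → ℝ)
    (hpc : IsPartialCov ((I₁ ×ˢ I₁) ∪ (I₂ ×ˢ I₂)) KΩ)
    (H : Type*) [NormedAddCommGroup H] [InnerProductSpace ℝ H]
    (φ : ↥(I₁ ∩ I₂) → H)
    (hφ : ∀ u v : ↥(I₁ ∩ I₂), KΩ u.1 v.1 = ⟪φ u, φ v⟫)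
    (a : I → H)
    (ha : ∀ s : I, RepIn φ (a s) (fun u : ↥(I₁ ∩ I₂) => KΩ s u.1))
    (K : I → I → ℝ) :
    IsCompletion ((I₁ ×ˢ I₁) ∪ (I₂ ×ˢ I₂)) KΩ K ↔
      ∃ C : I → I → ℝ,
        (∀ s t : I,
          K s t = (if (s, t) ∈ (I₁ ×ˢ I₁) ∪ (I₂ ×ˢ I₂) then KΩ s t else ⟪a s, a t⟫)
            + C s t) ∧
        (∀ s t : I, (s ∈ I₁ ∧ t ∈ I₁) ∨ (s ∈ I₂ ∧ t ∈ I₂) → C s t = 0) ∧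
        IsCovOn ((I₁ \ I₂) ∪ (I₂ \ I₁))
          (fun s t =>
            if (s ∈ I₁ \ I₂ ∧ t ∈ I₁ \ I₂) ∨ (s ∈ I₂ \ I₁ ∧ t ∈ I₂ \ I₁)
            then KΩ s t - ⟪a s, a t⟫ else C s t) := by
  have hmem12 : ∀ s : I, s ∈ I₁ ∨ s ∈ I₂ := fun s => by
    have : s ∈ I₁ ∪ I₂ := by rw [hcover]; trivial
    exact this
  have hcov1 : IsCovOn I₁ KΩ := hpc I₁ subset_union_left
  have hcov2 : IsCovOn I₂ KΩ := hpc I₂ subset_union_right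
  have hKΩsym : ∀ {s t : I}, (s, t) ∈ (I₁ ×ˢ I₁) ∪ (I₂ ×ˢ I₂) → KΩ s t = KΩ t s := by
    rintro s t (⟨hs, ht⟩ | ⟨hs, ht⟩)
    · exact hcov1.1 s hs t ht
    · exact hcov2.1 s hs t ht
  have hΩsym : ∀ {s t : I}, (s, t) ∈ (I₁ ×ˢ I₁) ∪ (I₂ ×ˢ I₂) →
      (t, s) ∈ (I₁ ×ˢ I₁) ∪ (I₂ ×ˢ I₂) := by
    rintro s t (⟨hs, ht⟩ | ⟨hs, ht⟩)
    · exact Or.inl ⟨ht, hs⟩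
    · exact Or.inr ⟨ht, hs⟩
  have hJΩ : ∀ (t : I) (u : ↥(I₁ ∩ I₂)), (t, u.1) ∈ (I₁ ×ˢ I₁) ∪ (I₂ ×ˢ I₂) := by
    intro t u
    rcases hmem12 t with ht | ht
    · exact Or.inl ⟨ht, u.2.1⟩
    · exact Or.inr ⟨ht, u.2.2⟩
  have hnotΩ : ∀ {s t : I}, (s, t) ∉ (I₁ ×ˢ I₁) ∪ (I₂ ×ˢ I₂) →
      (s ∈ I₁ \ I₂ ∧ t ∈ I₂ \ I₁) ∨ (s ∈ I₂ \ I₁ ∧ t ∈ I₁ \ I₂) := by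
    intro s t h
    simp only [mem_union, mem_prod, not_or, not_and] at h
    rcases hmem12 s with hs | hs <;> rcases hmem12 t with ht | ht <;>
      simp only [mem_diff] <;> tauto
  have hBrep : ∀ (t : I) (u : ↥(I₁ ∩ I₂)), ⟪a t, a u.1⟫ = KΩ t u.1 := by
    intro t u
    have hz : ∀ v : ↥(I₁ ∩ I₂), ⟪a u.1 - φ u, φ v⟫ = 0 := by
      intro v
      rw [inner_sub_left, ← (ha u.1).2 v, ← hφ u v]; ring
    have h0 : ⟪a u.1 - φ u, a t⟫ = 0 := closure_span_inner_zero φ _ hz (ha t).1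
    have h0' : ⟪a t, a u.1 - φ u⟫ = 0 := by rw [real_inner_comm]; exact h0
    have h2 := (ha t).2 u
    rw [inner_sub_right] at h0'
    simp only at h2
    linarith
  -- for s not in the symmetric difference: a s reproduces
  have hJfull : ∀ {s : I}, s ∉ (I₁ \ I₂) ∪ (I₂ \ I₁) → s ∈ I₁ ∩ I₂ := by
    intro s h
    simp only [mem_union, mem_diff, not_or, not_and, not_not] at h
    rcases hmem12 s with hs | hs
    · exact ⟨hs, h.1 hs⟩
    · exact ⟨h.2 hs, hs⟩
  constructor
  · rintro ⟨hKcov, hKeq⟩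
    refine ⟨fun s t => K s t -
        (if (s, t) ∈ (I₁ ×ˢ I₁) ∪ (I₂ ×ˢ I₂) then KΩ s t else ⟪a s, a t⟫),
      fun s t => by ring, ?_, ?_⟩
    · intro s t h
      have hΩm : (s, t) ∈ (I₁ ×ˢ I₁) ∪ (I₂ ×ˢ I₂) := by
        rcases h with ⟨h1, h2⟩ | ⟨h1, h2⟩
        · exact Or.inl ⟨h1, h2⟩
        · exact Or.inr ⟨h1, h2⟩
      simp only [if_pos hΩm, hKeq (s, t) hΩm, sub_self]
    · -- covariance of L on the symmetric difference
      have hLM : ∀ s ∈ (I₁ \ I₂) ∪ (I₂ \ I₁), ∀ t ∈ (I₁ \ I₂) ∪ (I₂ \ I₁),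
          (if (s ∈ I₁ \ I₂ ∧ t ∈ I₁ \ I₂) ∨ (s ∈ I₂ \ I₁ ∧ t ∈ I₂ \ I₁)
            then KΩ s t - ⟪a s, a t⟫
            else K s t -
              (if (s, t) ∈ (I₁ ×ˢ I₁) ∪ (I₂ ×ˢ I₂) then KΩ s t else ⟪a s, a t⟫))
          = K s t - ⟪a s, a t⟫ := by
        intro s hs t ht
        by_cases hc : (s ∈ I₁ \ I₂ ∧ t ∈ I₁ \ I₂) ∨ (s ∈ I₂ \ I₁ ∧ t ∈ I₂ \ I₁)
        · have hΩm : (s, t) ∈ (I₁ ×ˢ I₁) ∪ (I₂ ×ˢ I₂) := by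
            rcases hc with ⟨h1, h2⟩ | ⟨h1, h2⟩
            · exact Or.inl ⟨h1.1, h2.1⟩
            · exact Or.inr ⟨h1.1, h2.1⟩
          rw [if_pos hc, hKeq (s, t) hΩm]
        · have hΩm : (s, t) ∉ (I₁ ×ˢ I₁) ∪ (I₂ ×ˢ I₂) := by
            intro hmem
            rcases hmem with ⟨h1, h2⟩ | ⟨h1, h2⟩ <;>
              rcases hs with hs | hs <;> rcases ht with ht | ht <;>
              simp only [mem_diff] at * <;> tauto
          rw [if_neg hc, if_neg hΩm]
      constructor
      · intro s hs t ht
        simp only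
        rw [hLM s hs t ht, hLM t ht s hs, hKcov.1 s trivial t trivial, real_inner_comm]
      · intro n t htD c
        simp only
        have hrepK : ∀ (s : I) (u : ↥(I₁ ∩ I₂)), K s u.1 = ⟪a s, φ u⟫ := fun s u => by
          rw [hKeq (s, u.1) (hJΩ s u)]; exact (ha s).2 u
        have hkerK : ∀ u v : ↥(I₁ ∩ I₂), K u.1 v.1 = ⟪φ u, φ v⟫ := fun u v => by
          rw [hKeq (u.1, v.1) (hJΩ u.1 v)]; exact hφ u v
        have hschur := schur_psd φ (fun u : ↥(I₁ ∩ I₂) => u.1) K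
          (fun s t => hKcov.1 s trivial t trivial)
          (fun n t c => hKcov.2 n t (fun i => trivial) c)
          a (fun s => (ha s).1) hrepK hkerK n t c
        have hsum : ∑ i, ∑ j, c i * c j *
            (if (t i ∈ I₁ \ I₂ ∧ t j ∈ I₁ \ I₂) ∨ (t i ∈ I₂ \ I₁ ∧ t j ∈ I₂ \ I₁)
              then KΩ (t i) (t j) - ⟪a (t i), a (t j)⟫
              else K (t i) (t j) -
                (if (t i, t j) ∈ (I₁ ×ˢ I₁) ∪ (I₂ ×ˢ I₂) then KΩ (t i) (t j)
                  else ⟪a (t i), a (t j)⟫))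
            = (∑ i, ∑ j, c i * c j * K (t i) (t j))
              - ∑ i, ∑ j, c i * c j * ⟪a (t i), a (t j)⟫ := by
          rw [← Finset.sum_sub_distrib]
          refine Finset.sum_congr rfl fun i _ => ?_
          rw [← Finset.sum_sub_distrib]
          refine Finset.sum_congr rfl fun j _ => ?_
          rw [hLM (t i) (htD i) (t j) (htD j)]; ring
        rw [hsum, quad_inner]
        linarith
  · rintro ⟨C, hCeq, hC0, hLcov⟩
    have hC0' : ∀ {s t : I}, (s, t) ∈ (I₁ ×ˢ I₁) ∪ (I₂ ×ˢ I₂) → C s t = 0 := by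
      rintro s t (⟨h1, h2⟩ | ⟨h1, h2⟩)
      · exact hC0 s t (Or.inl ⟨h1, h2⟩)
      · exact hC0 s t (Or.inr ⟨h1, h2⟩)
    have hKeqΩ : ∀ {s t : I}, (s, t) ∈ (I₁ ×ˢ I₁) ∪ (I₂ ×ˢ I₂) → K s t = KΩ s t := by
      intro s t h
      rw [hCeq s t, if_pos h, hC0' h]; ring
    -- the Schur-complement kernel of K equals L extended by zero
    have hM : ∀ s t : I, K s t - ⟪a s, a t⟫ =
        (if s ∈ (I₁ \ I₂) ∪ (I₂ \ I₁) ∧ t ∈ (I₁ \ I₂) ∪ (I₂ \ I₁)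
          then (if (s ∈ I₁ \ I₂ ∧ t ∈ I₁ \ I₂) ∨ (s ∈ I₂ \ I₁ ∧ t ∈ I₂ \ I₁)
            then KΩ s t - ⟪a s, a t⟫ else C s t)
          else 0) := by
      intro s t
      by_cases hsD : s ∈ (I₁ \ I₂) ∪ (I₂ \ I₁)
      · by_cases htD : t ∈ (I₁ \ I₂) ∪ (I₂ \ I₁)
        · rw [if_pos ⟨hsD, htD⟩]
          by_cases hc : (s ∈ I₁ \ I₂ ∧ t ∈ I₁ \ I₂) ∨ (s ∈ I₂ \ I₁ ∧ t ∈ I₂ \ I₁)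
          · have hΩm : (s, t) ∈ (I₁ ×ˢ I₁) ∪ (I₂ ×ˢ I₂) := by
              rcases hc with ⟨h1, h2⟩ | ⟨h1, h2⟩
              · exact Or.inl ⟨h1.1, h2.1⟩
              · exact Or.inr ⟨h1.1, h2.1⟩
            rw [if_pos hc, hKeqΩ hΩm]
          · have hΩm : (s, t) ∉ (I₁ ×ˢ I₁) ∪ (I₂ ×ˢ I₂) := by
              intro hmem
              rcases hmem with ⟨h1, h2⟩ | ⟨h1, h2⟩ <;>
                rcases hsD with hs | hs <;> rcases htD with ht | ht <;>
                simp only [mem_diff] at * <;> tauto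
            rw [if_neg hc, hCeq s t, if_neg hΩm]; ring
        · -- t is in J
          have htJ : t ∈ I₁ ∩ I₂ := hJfull htD
          have h1 : (s, t) ∈ (I₁ ×ˢ I₁) ∪ (I₂ ×ˢ I₂) := hJΩ s ⟨t, htJ⟩
          rw [if_neg (by tauto), hKeqΩ h1, hBrep s ⟨t, htJ⟩]; ring
      · have hsJ : s ∈ I₁ ∩ I₂ := hJfull hsD
        have h1 : (t, s) ∈ (I₁ ×ˢ I₁) ∪ (I₂ ×ˢ I₂) := hJΩ t ⟨s, hsJ⟩
        have h2 : (s, t) ∈ (I₁ ×ˢ I₁) ∪ (I₂ ×ˢ I₂) := hΩsym h1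
        rw [if_neg (by tauto), hKeqΩ h2, hKΩsym h2, ← hBrep t ⟨s, hsJ⟩, real_inner_comm]
        ring
    refine ⟨⟨?_, ?_⟩, ?_⟩
    · -- symmetry of K
      intro s _ t _
      have e1 := hM s t
      have e2 := hM t s
      have hic : ⟪a s, a t⟫ = ⟪a t, a s⟫ := real_inner_comm _ _
      by_cases hsD : s ∈ (I₁ \ I₂) ∪ (I₂ \ I₁)
      · by_cases htD : t ∈ (I₁ \ I₂) ∪ (I₂ \ I₁)
        · have hl := hLcov.1 s hsD t htD
          simp only at hl
          rw [if_pos (show s ∈ (I₁ \ I₂) ∪ (I₂ \ I₁) ∧ t ∈ (I₁ \ I₂) ∪ (I₂ \ I₁) from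
            ⟨hsD, htD⟩)] at e1
          rw [if_pos (show t ∈ (I₁ \ I₂) ∪ (I₂ \ I₁) ∧ s ∈ (I₁ \ I₂) ∪ (I₂ \ I₁) from
            ⟨htD, hsD⟩)] at e2
          linarith
        · rw [if_neg (show ¬(s ∈ (I₁ \ I₂) ∪ (I₂ \ I₁) ∧ t ∈ (I₁ \ I₂) ∪ (I₂ \ I₁)) from
            fun h => htD h.2)] at e1
          rw [if_neg (show ¬(t ∈ (I₁ \ I₂) ∪ (I₂ \ I₁) ∧ s ∈ (I₁ \ I₂) ∪ (I₂ \ I₁)) from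
            fun h => htD h.1)] at e2
          linarith
      · rw [if_neg (show ¬(s ∈ (I₁ \ I₂) ∪ (I₂ \ I₁) ∧ t ∈ (I₁ \ I₂) ∪ (I₂ \ I₁)) from
          fun h => hsD h.1)] at e1
        rw [if_neg (show ¬(t ∈ (I₁ \ I₂) ∪ (I₂ \ I₁) ∧ s ∈ (I₁ \ I₂) ∪ (I₂ \ I₁)) from
          fun h => hsD h.2)] at e2
        linarith
    · -- positivity of K
      intro n t _ c
      have hsplit : ∑ i, ∑ j, c i * c j * K (t i) (t j)
          = (∑ i, ∑ j, c i * c j * ⟪a (t i), a (t j)⟫)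
            + ∑ i, ∑ j, c i * c j *
              (if t i ∈ (I₁ \ I₂) ∪ (I₂ \ I₁) ∧ t j ∈ (I₁ \ I₂) ∪ (I₂ \ I₁)
                then (if (t i ∈ I₁ \ I₂ ∧ t j ∈ I₁ \ I₂) ∨ (t i ∈ I₂ \ I₁ ∧ t j ∈ I₂ \ I₁)
                  then KΩ (t i) (t j) - ⟪a (t i), a (t j)⟫ else C (t i) (t j))
                else 0) := by
        rw [← Finset.sum_add_distrib]
        refine Finset.sum_congr rfl fun i _ => ?_
        rw [← Finset.sum_add_distrib]
        refine Finset.sum_congr rfl fun j _ => ?_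
        rw [← hM (t i) (t j)]; ring
      rw [hsplit]
      have h1 : 0 ≤ ∑ i, ∑ j, c i * c j * ⟪a (t i), a (t j)⟫ := by
        rw [quad_inner]; positivity
      have h2 : 0 ≤ ∑ i, ∑ j, c i * c j *
          (if t i ∈ (I₁ \ I₂) ∪ (I₂ \ I₁) ∧ t j ∈ (I₁ \ I₂) ∪ (I₂ \ I₁)
            then (if (t i ∈ I₁ \ I₂ ∧ t j ∈ I₁ \ I₂) ∨ (t i ∈ I₂ \ I₁ ∧ t j ∈ I₂ \ I₁)
              then KΩ (t i) (t j) - ⟪a (t i), a (t j)⟫ else C (t i) (t j))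
            else 0) := by
        by_cases hD : ((I₁ \ I₂) ∪ (I₂ \ I₁) : Set I).Nonempty
        · obtain ⟨d₀, hd₀⟩ := hD
          set t' : Fin n → I := fun i => if t i ∈ (I₁ \ I₂) ∪ (I₂ \ I₁) then t i else d₀
            with ht'
          set c' : Fin n → ℝ := fun i => if t i ∈ (I₁ \ I₂) ∪ (I₂ \ I₁) then c i else 0
            with hc'
          have ht'D : ∀ i, t' i ∈ (I₁ \ I₂) ∪ (I₂ \ I₁) := by
            intro i
            rw [ht']
            by_cases hi : t i ∈ (I₁ \ I₂) ∪ (I₂ \ I₁) <;> simp [hi, hd₀]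
          have hL := hLcov.2 n t' ht'D c'
          simp only at hL
          have heq : ∀ i j, c' i * c' j *
              (if (t' i ∈ I₁ \ I₂ ∧ t' j ∈ I₁ \ I₂) ∨ (t' i ∈ I₂ \ I₁ ∧ t' j ∈ I₂ \ I₁)
                then KΩ (t' i) (t' j) - ⟪a (t' i), a (t' j)⟫ else C (t' i) (t' j))
              = c i * c j *
              (if t i ∈ (I₁ \ I₂) ∪ (I₂ \ I₁) ∧ t j ∈ (I₁ \ I₂) ∪ (I₂ \ I₁)
                then (if (t i ∈ I₁ \ I₂ ∧ t j ∈ I₁ \ I₂) ∨ (t i ∈ I₂ \ I₁ ∧ t j ∈ I₂ \ I₁)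
                  then KΩ (t i) (t j) - ⟪a (t i), a (t j)⟫ else C (t i) (t j))
                else 0) := by
            intro i j
            by_cases hi : t i ∈ (I₁ \ I₂) ∪ (I₂ \ I₁) <;>
              by_cases hj : t j ∈ (I₁ \ I₂) ∪ (I₂ \ I₁)
            · have hti : t' i = t i := by simp only [ht']; exact if_pos hi
              have htj : t' j = t j := by simp only [ht']; exact if_pos hj
              have hci : c' i = c i := by simp only [hc']; exact if_pos hi
              have hcj : c' j = c j := by simp only [hc']; exact if_pos hj
              rw [hti, htj, hci, hcj,
                if_pos (show t i ∈ (I₁ \ I₂) ∪ (I₂ \ I₁) ∧ t j ∈ (I₁ \ I₂) ∪ (I₂ \ I₁) from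
                  ⟨hi, hj⟩)]
            · have hcj : c' j = 0 := by simp only [hc']; exact if_neg hj
              rw [hcj, if_neg (show ¬(t i ∈ (I₁ \ I₂) ∪ (I₂ \ I₁) ∧
                t j ∈ (I₁ \ I₂) ∪ (I₂ \ I₁)) from fun h => hj h.2)]
              ring
            · have hci : c' i = 0 := by simp only [hc']; exact if_neg hi
              rw [hci, if_neg (show ¬(t i ∈ (I₁ \ I₂) ∪ (I₂ \ I₁) ∧
                t j ∈ (I₁ \ I₂) ∪ (I₂ \ I₁)) from fun h => hi h.1)]
              ring
            · have hci : c' i = 0 := by simp only [hc']; exact if_neg hi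
              rw [hci, if_neg (show ¬(t i ∈ (I₁ \ I₂) ∪ (I₂ \ I₁) ∧
                t j ∈ (I₁ \ I₂) ∪ (I₂ \ I₁)) from fun h => hi h.1)]
              ring
          calc (0:ℝ) ≤ ∑ i, ∑ j, c' i * c' j *
              (if (t' i ∈ I₁ \ I₂ ∧ t' j ∈ I₁ \ I₂) ∨ (t' i ∈ I₂ \ I₁ ∧ t' j ∈ I₂ \ I₁)
                then KΩ (t' i) (t' j) - ⟪a (t' i), a (t' j)⟫ else C (t' i) (t' j)) := hL
            _ = _ := by
              refine Finset.sum_congr rfl fun i _ => Finset.sum_congr rfl fun j _ => heq i j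
        · have hD' : ∀ x : I, x ∉ (I₁ \ I₂) ∪ (I₂ \ I₁) := by
            intro x hx; exact hD ⟨x, hx⟩
          have : ∀ i j : Fin n, (if t i ∈ (I₁ \ I₂) ∪ (I₂ \ I₁) ∧
              t j ∈ (I₁ \ I₂) ∪ (I₂ \ I₁)
            then (if (t i ∈ I₁ \ I₂ ∧ t j ∈ I₁ \ I₂) ∨ (t i ∈ I₂ \ I₁ ∧ t j ∈ I₂ \ I₁)
              then KΩ (t i) (t j) - ⟪a (t i), a (t j)⟫ else C (t i) (t j))
            else 0) = 0 := by
            intro i j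
            rw [if_neg]
            intro ⟨hi, _⟩; exact hD' _ hi
          simp only [this, mul_zero, Finset.sum_const_zero, le_refl]
      linarith
    · -- agreement on Ω
      rintro ⟨s, t⟩ hp
      exact hKeqΩ hp
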